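/- Let A = {i_1 < i_2 < ... < i_t} ⊆ {1,...,n} with t > 1, and let B = {(i_1+i_2)/2, (i_2+i_3)/2, ..., (i_{t−1}+i_t)/2}. For every x ∈ {0,1}^n: if |x| ∈ A then (i_t − i_1)/2 + 0.5 + ∑_{i∈A} Γ_i(x) − ∑_{μ∈B} Γ_μ(x) = 0.5, and if |x| ∉ A then (i_t − i_1)/2 + 0.5 + ∑_{i∈A} Γ_i(x) − ∑_{μ∈B} Γ_μ(x) ≤ −0.5. In particular, f_A(x) = sign((i_t − i_1)/2 + 0.5 + ∑_{i∈A} Γ_i(x) − ∑_{μ∈B} Γ_μ(x)) for all x ∈ {0,1}^n. -/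

import Mathlib

/-- ReLU(ξ) = max{0, ξ}. -/
def relu (ξ : ℝ) : ℝ := max 0 ξ

/-- The Hamming weight |x| of x ∈ {0,1}^n. -/
def hw {n : ℕ} (x : Fin n → Bool) : ℕ := (Finset.univ.filter (fun i => x i)).card

/-- Γ_a(x) = −ReLU(|x| − a) − ReLU(a − |x|), as a function of w = |x| ∈ ℝ. -/
def Γ (a w : ℝ) : ℝ := -relu (w - a) - relu (a - w)

lemma Gamma_eq_neg_abs (a w : ℝ) : Γ a w = -|w - a| := by
  unfold Γ relu
  rcases le_total a w with h | h
  · rw [max_eq_right (by linarith), max_eq_left (by linarith),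
      abs_of_nonneg (by linarith)]
    ring
  · rw [max_eq_left (by linarith), max_eq_right (by linarith),
      abs_of_nonpos (by linarith)]
    ring

lemma phi_nonneg (u v w : ℝ) :
    0 ≤ (|w - u| + |w - v|) / 2 - |w - (u + v) / 2| := by
  have h := abs_add_le (w - u) (w - v)
  have h2 : |w - (u + v) / 2| = |(w - u) + (w - v)| / 2 := by
    rw [show w - (u + v) / 2 = ((w - u) + (w - v)) / 2 by ring, abs_div]
    norm_num
  rw [h2]; linarith

lemma phi_zero (u v w : ℝ) (huv : u ≤ v) (h : w ≤ u ∨ v ≤ w) :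
    (|w - u| + |w - v|) / 2 - |w - (u + v) / 2| = 0 := by
  rcases h with h | h
  · rw [abs_of_nonpos (by linarith), abs_of_nonpos (by linarith),
      abs_of_nonpos (by linarith)]
    ring
  · rw [abs_of_nonneg (by linarith), abs_of_nonneg (by linarith),
      abs_of_nonneg (by linarith)]
    ring

lemma phi_ge_one (u v w : ℝ) (h1 : u + 1 ≤ w) (h2 : w + 1 ≤ v) :
    1 ≤ (|w - u| + |w - v|) / 2 - |w - (u + v) / 2| := by
  rw [abs_of_nonneg (by linarith), abs_of_nonpos (by linarith)]
  have : |w - (u + v) / 2| ≤ (v - u) / 2 - 1 := by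
    rw [abs_le]; constructor <;> linarith
  linarith

lemma sum_split (t : ℕ) (f : Fin (t + 1) → ℝ) :
    ∑ j, f j = (f 0 + f (Fin.last t)) / 2
      + ∑ j : Fin t, (f j.castSucc + f j.succ) / 2 := by
  have h1 : ∑ j, f j = (∑ j : Fin t, f j.castSucc) + f (Fin.last t) :=
    Fin.sum_univ_castSucc f
  have h2 : ∑ j, f j = f 0 + ∑ j : Fin t, f j.succ := Fin.sum_univ_succ f
  have h3 : ∑ j : Fin t, (f j.castSucc + f j.succ) / 2
      = ((∑ j : Fin t, f j.castSucc) + ∑ j : Fin t, f j.succ) / 2 := by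
    rw [← Finset.sum_add_distrib, ← Finset.sum_div]
  rw [h3]; linarith

lemma find_gap {t : ℕ} (a : Fin (t + 1) → ℕ) (ha : StrictMono a) (w : ℕ)
    (h0 : a 0 ≤ w) (hT : w ≤ a (Fin.last t)) (hne : ¬ ∃ j, a j = w) :
    ∃ j : Fin t, a j.castSucc < w ∧ w < a j.succ := by
  classical
  set s : Finset (Fin (t + 1)) := Finset.univ.filter (fun j => a j ≤ w) with hs
  have h0s : (0 : Fin (t + 1)) ∈ s := by simp [hs, h0]
  have hsne : s.Nonempty := ⟨0, h0s⟩
  set k := s.max' hsne with hk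
  have hks : k ∈ s := s.max'_mem hsne
  have hak : a k ≤ w := by simpa [hs] using hks
  have hakw : a k < w := lt_of_le_of_ne hak (fun h => hne ⟨k, h⟩)
  have hklast : k ≠ Fin.last t := by
    intro h
    rw [h] at hakw
    omega
  have hklt : (k : ℕ) < t := by
    have := Fin.lt_last_iff_ne_last.mpr hklast
    simpa [Fin.lt_iff_val_lt_val] using this
  refine ⟨⟨(k : ℕ), hklt⟩, ?_, ?_⟩
  · have : (⟨(k : ℕ), hklt⟩ : Fin t).castSucc = k := by
      ext; simp
    rw [this]; exact hakw
  · by_contra hle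
    push_neg at hle
    have hmem : (⟨(k : ℕ), hklt⟩ : Fin t).succ ∈ s := by
      simp only [hs, Finset.mem_filter, Finset.mem_univ, true_and]
      exact hle
    have := s.le_max' _ hmem
    rw [← hk] at this
    have : ((⟨(k : ℕ), hklt⟩ : Fin t).succ : ℕ) ≤ (k : ℕ) := this
    simp at this

open Classical in
/-- Lemma on the ReLU representation of symmetric functions.  The set
A = {i_1 < ... < i_t} ⊆ {1,...,n} with t > 1 is encoded by a strictly monotone
map `a : Fin (t+1) → ℕ` (so the set has t+1 ≥ 2 elements), and
B = {(i_1+i_2)/2, ..., (i_{t−1}+i_t)/2} is the set of midpoints of consecutive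
elements of A. -/
theorem stmt4 (n t : ℕ) (ht : 1 ≤ t) (a : Fin (t + 1) → ℕ) (ha : StrictMono a)
    (haI : ∀ j, a j ∈ Finset.Icc 1 n) (x : Fin n → Bool) :
    ((∃ j, a j = hw x) →
      ((a (Fin.last t) : ℝ) - (a 0 : ℝ)) / 2 + 0.5
        + (∑ j, Γ (a j : ℝ) (hw x : ℝ))
        - (∑ j : Fin t, Γ (((a j.castSucc : ℝ) + (a j.succ : ℝ)) / 2) (hw x : ℝ)) = 0.5) ∧
    ((¬ ∃ j, a j = hw x) →
      ((a (Fin.last t) : ℝ) - (a 0 : ℝ)) / 2 + 0.5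
        + (∑ j, Γ (a j : ℝ) (hw x : ℝ))
        - (∑ j : Fin t, Γ (((a j.castSucc : ℝ) + (a j.succ : ℝ)) / 2) (hw x : ℝ)) ≤ -0.5) ∧
    (if ∃ j, a j = hw x then (1 : ℝ) else -1) =
      Real.sign (((a (Fin.last t) : ℝ) - (a 0 : ℝ)) / 2 + 0.5
        + (∑ j, Γ (a j : ℝ) (hw x : ℝ))
        - (∑ j : Fin t, Γ (((a j.castSucc : ℝ) + (a j.succ : ℝ)) / 2) (hw x : ℝ))) := by
  set w : ℕ := hw x with hwdef
  set W : ℝ := (w : ℝ) with hWdef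
  set f : Fin (t + 1) → ℝ := fun j => |W - (a j : ℝ)| with hf
  -- rewrite the Γ sums
  have hS1 : (∑ j, Γ (a j : ℝ) W) = -∑ j, f j := by
    rw [← Finset.sum_neg_distrib]
    exact Finset.sum_congr rfl (fun j _ => Gamma_eq_neg_abs _ _)
  have hS2 : (∑ j : Fin t, Γ (((a j.castSucc : ℝ) + (a j.succ : ℝ)) / 2) W)
      = -∑ j : Fin t, |W - ((a j.castSucc : ℝ) + (a j.succ : ℝ)) / 2| := by
    rw [← Finset.sum_neg_distrib]
    exact Finset.sum_congr rfl (fun j _ => Gamma_eq_neg_abs _ _)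
  set φ : Fin t → ℝ := fun j =>
    (f j.castSucc + f j.succ) / 2 - |W - ((a j.castSucc : ℝ) + (a j.succ : ℝ)) / 2|
    with hφ
  have hφ_nonneg : ∀ j, 0 ≤ φ j := fun j => phi_nonneg _ _ _
  have hD : (∑ j, f j) - ∑ j : Fin t, |W - ((a j.castSucc : ℝ) + (a j.succ : ℝ)) / 2|
      = (f 0 + f (Fin.last t)) / 2 + ∑ j : Fin t, φ j := by
    rw [sum_split t f, hφ]
    rw [Finset.sum_sub_distrib]
    ring
  have hmono : ∀ j : Fin t, (a j.castSucc : ℝ) ≤ (a j.succ : ℝ) := by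
    intro j
    exact_mod_cast (ha (Fin.castSucc_lt_succ (i := j))).le
  -- Claim 1
  have claim1 : (∃ j, a j = w) →
      (∑ j, f j) - ∑ j : Fin t, |W - ((a j.castSucc : ℝ) + (a j.succ : ℝ)) / 2|
        = ((a (Fin.last t) : ℝ) - (a 0 : ℝ)) / 2 := by
    rintro ⟨k, hk⟩
    have hW : W = (a k : ℝ) := by rw [hWdef, ← hk]
    have h0k : (a 0 : ℝ) ≤ W := by
      rw [hW]; exact_mod_cast (ha.monotone (Fin.zero_le k))
    have hkT : W ≤ (a (Fin.last t) : ℝ) := by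
      rw [hW]; exact_mod_cast (ha.monotone (Fin.le_last k))
    have hend : (f 0 + f (Fin.last t)) / 2 = ((a (Fin.last t) : ℝ) - (a 0 : ℝ)) / 2 := by
      rw [hf]
      simp only
      rw [abs_of_nonneg (by linarith), abs_of_nonpos (by linarith)]
      ring
    have hφ0 : ∀ j : Fin t, φ j = 0 := by
      intro j
      apply phi_zero _ _ _ (hmono j)
      rcases le_or_gt k j.castSucc with h | h
      · left
        rw [hW]
        exact_mod_cast ha.monotone h
      · right
        rw [hW]
        have : j.succ ≤ k := Fin.castSucc_lt_iff_succ_le.mp h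
        exact_mod_cast ha.monotone this
    rw [hD, hend, Finset.sum_eq_zero (fun j _ => hφ0 j)]
    ring
  -- Claim 2
  have claim2 : (¬ ∃ j, a j = w) →
      ((a (Fin.last t) : ℝ) - (a 0 : ℝ)) / 2 + 1
        ≤ (∑ j, f j) - ∑ j : Fin t, |W - ((a j.castSucc : ℝ) + (a j.succ : ℝ)) / 2| := by
    intro hne
    rw [hD]
    have hsumφ : (0 : ℝ) ≤ ∑ j : Fin t, φ j :=
      Finset.sum_nonneg (fun j _ => hφ_nonneg j)
    rcases lt_or_ge w (a 0) with h0 | h0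
    · -- w < a 0
      have h0' : (W : ℝ) + 1 ≤ (a 0 : ℝ) := by rw [hWdef]; exact_mod_cast h0
      have hT' : (W : ℝ) + 1 ≤ (a (Fin.last t) : ℝ) := by
        have := ha.monotone (Fin.zero_le (Fin.last t))
        have : (a 0 : ℝ) ≤ (a (Fin.last t) : ℝ) := by exact_mod_cast this
        linarith
      have hend : ((a (Fin.last t) : ℝ) - (a 0 : ℝ)) / 2 + 1 ≤ (f 0 + f (Fin.last t)) / 2 := by
        rw [hf]; simp only
        rw [abs_of_nonpos (by linarith), abs_of_nonpos (by linarith)]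
        linarith
      linarith
    rcases lt_or_ge (a (Fin.last t)) w with hT | hT
    · -- a last < w
      have hT' : (a (Fin.last t) : ℝ) + 1 ≤ W := by rw [hWdef]; exact_mod_cast hT
      have h0' : (a 0 : ℝ) + 1 ≤ W := by
        have := ha.monotone (Fin.zero_le (Fin.last t))
        have : (a 0 : ℝ) ≤ (a (Fin.last t) : ℝ) := by exact_mod_cast this
        linarith
      have hend : ((a (Fin.last t) : ℝ) - (a 0 : ℝ)) / 2 + 1 ≤ (f 0 + f (Fin.last t)) / 2 := by
        rw [hf]; simp only
        rw [abs_of_nonneg (by linarith), abs_of_nonneg (by linarith)]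
        linarith
      linarith
    · -- a 0 ≤ w ≤ a last
      obtain ⟨j0, hj1, hj2⟩ := find_gap a ha w h0 hT hne
      have hφ1 : 1 ≤ φ j0 := by
        apply phi_ge_one
        · have : (a j0.castSucc : ℝ) + 1 ≤ W := by rw [hWdef]; exact_mod_cast hj1
          exact this
        · have : W + 1 ≤ (a j0.succ : ℝ) := by rw [hWdef]; exact_mod_cast hj2
          exact this
      have hsum : 1 ≤ ∑ j : Fin t, φ j := by
        calc (1 : ℝ) ≤ φ j0 := hφ1
        _ ≤ ∑ j : Fin t, φ j :=
          Finset.single_le_sum (fun j _ => hφ_nonneg j) (Finset.mem_univ j0)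
      have hend : ((a (Fin.last t) : ℝ) - (a 0 : ℝ)) / 2 ≤ (f 0 + f (Fin.last t)) / 2 := by
        rw [hf]; simp only
        have h1 : (a 0 : ℝ) - W ≤ |W - (a 0 : ℝ)| := by
          rw [abs_sub_comm]; exact le_abs_self _
        have h2 : W - (a (Fin.last t) : ℝ) ≤ |W - (a (Fin.last t) : ℝ)| := le_abs_self _
        have h0' : (a 0 : ℝ) ≤ W := by rw [hWdef]; exact_mod_cast h0
        have hT' : W ≤ (a (Fin.last t) : ℝ) := by rw [hWdef]; exact_mod_cast hT
        have h3 : W - (a 0 : ℝ) ≤ |W - (a 0 : ℝ)| := le_abs_self _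
        have h4 : (a (Fin.last t) : ℝ) - W ≤ |W - (a (Fin.last t) : ℝ)| := by
          rw [abs_sub_comm]; exact le_abs_self _
        linarith
      linarith
  -- finish
  refine ⟨?_, ?_, ?_⟩
  · intro h
    have := claim1 h
    rw [hS1, hS2]
    norm_num
    linarith
  · intro h
    have := claim2 h
    rw [hS1, hS2]
    norm_num
    linarith
  · by_cases h : ∃ j, a j = w
    · have := claim1 h
      rw [if_pos h, hS1, hS2]
      rw [eq_comm]
      apply Real.sign_of_pos
      norm_num
      linarith
    · have := claim2 h
      rw [if_neg h, hS1, hS2]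
      rw [eq_comm]
      rw [Real.sign_of_neg]
      norm_num
      linarith
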